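/- Let k be a commutative ring, R a commutative k-algebra, and L a Lie algebra over k which is also an R-module. Suppose ρ : L → Der_k(R) is a k-linear map into the k-linear derivations of R satisfying the Leibniz rule ⁅X, f • Y⁆ = f • ⁅X, Y⁆ + (ρ(X) f) • Y for all X, Y ∈ L and f ∈ R, and suppose the R-module L is faithful (i.e. if f • Z = 0 for all Z ∈ L then f = 0). Then ρ preserves brackets: ρ(⁅X, Y⁆) = ρ(X) ∘ ρ(Y) − ρ(Y) ∘ ρ(X) (the commutator bracket of derivations) for all X, Y ∈ L; that is, the anchor of a Lie algebroid-type structure is a Lie algebra homomorphism into derivations. -/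
import Mathlib

/-- The anchor of a Lie algebroid-type structure is a Lie algebra homomorphism
into derivations: if `ρ : L → Der_k(R)` satisfies the Leibniz rule and the
`R`-module `L` is faithful, then `ρ` preserves brackets (with the commutator
bracket of derivations). -/
theorem anchor_is_lie_hom (k R L : Type*) [CommRing k] [CommRing R] [Algebra k R]
    [LieRing L] [LieAlgebra k L] [Module R L]
    (ρ : L →ₗ[k] Derivation k R R)
    (hLeib : ∀ (X Y : L) (f : R), ⁅X, f • Y⁆ = f • ⁅X, Y⁆ + (ρ X f) • Y)
    (hfaith : ∀ f : R, (∀ Z : L, f • Z = 0) → f = 0) :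
    ∀ (X Y : L) (f : R), ρ ⁅X, Y⁆ f = ρ X (ρ Y f) - ρ Y (ρ X f) := by
  intro X Y f
  have key : ρ ⁅X, Y⁆ f - (ρ X (ρ Y f) - ρ Y (ρ X f)) = 0 := by
    apply hfaith
    intro Z
    have h1 : ⁅⁅X, Y⁆, f • Z⁆ = ⁅X, ⁅Y, f • Z⁆⁆ - ⁅Y, ⁅X, f • Z⁆⁆ := lie_lie _ _ _
    simp only [hLeib, lie_add, lie_smul, map_smul, Derivation.leibniz, smul_add,
      smul_smul] at h1
    rw [lie_lie] at h1
    rw [sub_smul, sub_smul]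
    linear_combination (norm := module) h1
  linear_combination key
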